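/- Let (X, ‖·‖) be a real Banach space and let T : X → X be an enriched 𝒜-contraction, i.e., there exist b ∈ [0,∞) and f ∈ 𝒜 with ‖b(u−v) + Tu − Tv‖ ≤ f((b+1)‖u−v‖, ‖u−Tu‖, ‖v−Tv‖) for all u, v ∈ X with u ≠ v. Then T has a unique fixed point p ∈ X, and there exists λ ∈ (0,1] such that for every u₀ ∈ X the sequence defined by u_{n+1} = (1−λ)u_n + λT u_n (n ≥ 0) converges to p. -/

import Mathlib

open Filter


/-- Membership in the class `𝒜` of Akram-type comparison functions. -/
def MemA (f : ℝ × ℝ × ℝ → ℝ) : Prop :=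
  ContinuousOn f {p : ℝ × ℝ × ℝ | 0 ≤ p.1 ∧ 0 ≤ p.2.1 ∧ 0 ≤ p.2.2} ∧
  (∃ k : ℝ, 0 ≤ k ∧ k < 1 ∧ ∀ r s : ℝ, 0 ≤ r → 0 ≤ s →
    (r ≤ f (s, r, s) ∨ r ≤ f (r, s, s)) → r ≤ k * s) ∧
  (∀ lam : ℝ, 0 < lam → ∀ r s t : ℝ, 0 ≤ r → 0 ≤ s → 0 ≤ t →
    lam * f (r, s, t) ≤ f (lam * r, lam * s, lam * t))

/-- An enriched `𝒜`-contraction on a real Banach space has a unique fixed point `p`,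
and there is `λ ∈ (0,1]` such that every Krasnoselskii iteration
`u_{n+1} = (1-λ) u_n + λ T u_n` converges to `p`. -/
theorem enriched_A_contraction_fixedPoint
    {X : Type*} [NormedAddCommGroup X] [NormedSpace ℝ X] [CompleteSpace X]
    (T : X → X) (f : ℝ × ℝ × ℝ → ℝ) (hf : MemA f) (b : ℝ) (hb : 0 ≤ b)
    (hT : ∀ u v : X, u ≠ v →
      ‖b • (u - v) + T u - T v‖ ≤ f ((b + 1) * ‖u - v‖, ‖u - T u‖, ‖v - T v‖)) :
    ∃ p : X, (T p = p ∧ ∀ q : X, T q = q → q = p) ∧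
      ∃ lam : ℝ, 0 < lam ∧ lam ≤ 1 ∧
        ∀ u : ℕ → X, (∀ n : ℕ, u (n + 1) = (1 - lam) • u n + lam • T (u n)) →
          Filter.Tendsto u Filter.atTop (nhds p) := by
  obtain ⟨hcont, ⟨k, hk0, hk1, hkey⟩, hhom⟩ := hf
  have hb1 : (0:ℝ) < b + 1 := by linarith
  set lam : ℝ := (b+1)⁻¹ with hlam_def
  have hlam_pos : 0 < lam := inv_pos.mpr hb1
  have hlam_le1 : lam ≤ 1 := by
    rw [hlam_def]
    exact inv_le_one_of_one_le₀ (by linarith)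
  have hlam_mul : lam * (b+1) = 1 := inv_mul_cancel₀ hb1.ne'
  set g : X → X := fun x => (1 - lam) • x + lam • T x with hg
  have hgu : ∀ u : X, u - g u = lam • (u - T u) := by
    intro u; simp only [hg]; module
  have hkeyv : ∀ u v : X, g u - g v = lam • (b • (u - v) + T u - T v) := by
    intro u v
    have h1 : 1 - lam = lam * b := by
      rw [hlam_def]
      field_simp
      ring
    simp only [hg]
    rw [h1]
    module
  have hA : ∀ u v : X, u ≠ v → ‖g u - g v‖ ≤ f (‖u - v‖, ‖u - g u‖, ‖v - g v‖) := by
    intro u v huv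
    have h2 := hT u v huv
    have h3 : ‖g u - g v‖ = lam * ‖b • (u - v) + T u - T v‖ := by
      rw [hkeyv u v, norm_smul, Real.norm_eq_abs, abs_of_pos hlam_pos]
    have h4 := hhom lam hlam_pos ((b+1) * ‖u - v‖) ‖u - T u‖ ‖v - T v‖
      (by positivity) (norm_nonneg _) (norm_nonneg _)
    have h5 : lam * ((b+1) * ‖u - v‖) = ‖u - v‖ := by
      rw [← mul_assoc, hlam_mul, one_mul]
    have h6 : ‖u - g u‖ = lam * ‖u - T u‖ := by
      rw [hgu, norm_smul, Real.norm_eq_abs, abs_of_pos hlam_pos]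
    have h7 : ‖v - g v‖ = lam * ‖v - T v‖ := by
      rw [hgu, norm_smul, Real.norm_eq_abs, abs_of_pos hlam_pos]
    rw [h3, h6, h7, ← h5]
    exact le_trans (mul_le_mul_of_nonneg_left h2 hlam_pos.le) h4
  have hB : ∀ x : X, ‖g x - g (g x)‖ ≤ k * ‖x - g x‖ := by
    intro x
    by_cases hx : g x = x
    · rw [hx, hx]
      simp [hk0]
    · have h := hA (g x) x hx
      rw [norm_sub_rev (g (g x)) (g x)] at h
      rw [norm_sub_rev (g x) x] at h
      exact hkey _ _ (norm_nonneg _) (norm_nonneg _) (Or.inl h)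
  have hcauchy : ∀ u : ℕ → X, (∀ n, u (n+1) = g (u n)) → CauchySeq u := by
    intro u hu
    apply cauchySeq_of_le_geometric k (‖u 1 - u 0‖) hk1
    intro n
    induction n with
    | zero =>
      rw [pow_zero, mul_one, dist_eq_norm, norm_sub_rev]
    | succ n ih =>
      have h1 : ‖u (n+1) - u (n+1+1)‖ ≤ k * ‖u n - u (n+1)‖ := by
        have h := hB (u n)
        rw [← hu n, ← hu (n+1)] at h
        exact h
      calc dist (u (n+1)) (u (n+1+1)) = ‖u (n+1) - u (n+1+1)‖ := dist_eq_norm _ _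
        _ ≤ k * ‖u n - u (n+1)‖ := h1
        _ = k * dist (u n) (u (n+1)) := by rw [dist_eq_norm]
        _ ≤ k * (‖u 1 - u 0‖ * k ^ n) := mul_le_mul_of_nonneg_left ih hk0
        _ = ‖u 1 - u 0‖ * k ^ (n+1) := by ring
  have hlim : ∀ (u : ℕ → X) (p : X), (∀ n, u (n+1) = g (u n)) →
      Tendsto u atTop (nhds p) → g p = p := by
    intro u p hu hp
    by_contra hne
    set c := ‖p - g p‖ with hc
    have hc_pos : 0 < c := by
      rw [hc, norm_pos_iff, sub_ne_zero]
      exact fun h => hne h.symm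
    have hp1 : Tendsto (fun n => u (n+1)) atTop (nhds p) :=
      hp.comp (tendsto_add_atTop_nat 1)
    have hdiff : Tendsto (fun n => ‖u n - u (n+1)‖) atTop (nhds 0) := by
      have := (hp.sub hp1).norm
      simpa using this
    have hev : ∀ᶠ n in atTop, ‖u n - u (n+1)‖ < c :=
      hdiff.eventually (gt_mem_nhds hc_pos)
    have hne' : ∀ᶠ n in atTop, u n ≠ p := by
      filter_upwards [hev] with n hn h
      rw [hu n, h, ← hc] at hn
      exact lt_irrefl c hn
    have hineq : ∀ᶠ n in atTop, ‖g p - u (n+1)‖ ≤ f (‖p - u n‖, c, ‖u n - u (n+1)‖) := by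
      filter_upwards [hne'] with n hn
      have h := hA p (u n) (fun h => hn h.symm)
      rw [← hc] at h
      rw [hu n]
      exact h
    have hanorm : Tendsto (fun n => ‖p - u n‖) atTop (nhds 0) := by
      have := ((tendsto_const_nhds (x := p)).sub hp).norm
      simpa using this
    have haten : Tendsto (fun n => ((‖p - u n‖, c, ‖u n - u (n+1)‖) : ℝ × ℝ × ℝ)) atTop
        (nhds ((0, c, 0) : ℝ × ℝ × ℝ)) :=
      hanorm.prodMk_nhds (tendsto_const_nhds.prodMk_nhds hdiff)
    have hmem : ((0:ℝ), c, (0:ℝ)) ∈ {p : ℝ × ℝ × ℝ | 0 ≤ p.1 ∧ 0 ≤ p.2.1 ∧ 0 ≤ p.2.2} :=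
      ⟨le_refl 0, hc_pos.le, le_refl 0⟩
    have hfc : Tendsto (fun n => f (‖p - u n‖, c, ‖u n - u (n+1)‖)) atTop
        (nhds (f (0, c, 0))) := by
      have hcw := hcont _ hmem
      apply hcw.tendsto.comp
      apply tendsto_nhdsWithin_of_tendsto_nhds_of_eventually_within _ haten
      exact Eventually.of_forall (fun n => ⟨norm_nonneg _, hc_pos.le, norm_nonneg _⟩)
    have hlhs : Tendsto (fun n => ‖g p - u (n+1)‖) atTop (nhds c) := by
      have := ((tendsto_const_nhds (x := g p)).sub hp1).norm
      rw [hc, norm_sub_rev]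
      simpa using this
    have hle : c ≤ f (0, c, 0) := le_of_tendsto_of_tendsto hlhs hfc hineq
    have h := hkey c 0 hc_pos.le le_rfl (Or.inl hle)
    rw [mul_zero] at h
    linarith
  have hfix : ∀ x : X, g x = x → T x = x := by
    intro x hx
    simp only [hg] at hx
    have h3 : x - (1 - lam) • x = lam • x := by module
    have h4 := eq_sub_of_add_eq' hx
    rw [h3] at h4
    exact smul_right_injective X hlam_pos.ne' h4
  have hlimT : ∀ (u : ℕ → X) (p : X), (∀ n, u (n+1) = g (u n)) →
      Tendsto u atTop (nhds p) → T p = p := fun u p hu hp => hfix p (hlim u p hu hp)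
  obtain ⟨p, hp⟩ := cauchySeq_tendsto_of_complete
    (hcauchy (fun n => g^[n] 0) (fun n => Function.iterate_succ_apply' g n 0))
  have hTp : T p = p := hlimT _ p (fun n => Function.iterate_succ_apply' g n 0) hp
  have huniq : ∀ q : X, T q = q → q = p := by
    intro q hq
    by_contra hne
    have h := hT q p hne
    rw [hq, hTp] at h
    have hL : b • (q - p) + q - p = (b+1) • (q - p) := by module
    rw [hL, norm_smul, Real.norm_eq_abs, abs_of_pos hb1] at h
    simp only [sub_self, norm_zero] at h
    have h2 := hkey ((b+1) * ‖q - p‖) 0 (by positivity) le_rfl (Or.inr h)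
    rw [mul_zero] at h2
    have hqp : (0:ℝ) < ‖q - p‖ := norm_pos_iff.mpr (sub_ne_zero.mpr hne)
    nlinarith
  refine ⟨p, ⟨hTp, huniq⟩, lam, hlam_pos, hlam_le1, ?_⟩
  intro u hu
  have hu' : ∀ n, u (n+1) = g (u n) := by
    intro n
    simp only [hg]
    exact hu n
  obtain ⟨q, hq⟩ := cauchySeq_tendsto_of_complete (hcauchy u hu')
  have : q = p := huniq q (hlimT u q hu' hq)
  rwa [this] at hq
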